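/- Let G be a group, H a normal subgroup of index 2 in a subgroup H' ≤ G, with H' = H ⊔ sH, and let i : G/H → G/H be the involution i(fH) = fsH. Define V₁ = {φ ∈ ℓ²(G/H) : φ∘i = φ} (even functions) and V₂ = {φ ∈ ℓ²(G/H) : φ∘i = −φ} (odd functions). Then V₁ and V₂ are nonzero closed G-invariant subspaces of ℓ²(G/H) that are orthogonal complements of each other; in particular, if G/H is infinite, the quasi-regular representation of G on ℓ²(G/H) is reducible. -/

import Mathlib

theorem lp_eval_continuous (α : Type*) (x : α) :
    Continuous (fun φ : lp (fun _ : α => ℂ) 2 => φ x) := by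
  refine (LipschitzWith.of_dist_le_mul (K := 1) fun φ ψ => ?_).continuous
  rw [NNReal.coe_one, one_mul, dist_eq_norm, dist_eq_norm]
  calc ‖φ x - ψ x‖ = ‖(φ - ψ) x‖ := by rw [lp.coeFn_sub]; rfl
    _ ≤ ‖φ - ψ‖ := lp.norm_apply_le_norm two_ne_zero _ _

/-- With `i : G/H → G/H` the involution `fH ↦ fsH`, the even and odd
functions form nonzero closed `G`-invariant mutually orthogonal complementary subspaces
of `ℓ²(G/H)`; in particular, if `G/H` is infinite, the quasi-regular representation is
reducible. -/
theorem stmt8 (G : Type*) [Group G] (H H' : Subgroup G) (hHH' : H ≤ H')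
    (hnorm : ∀ h ∈ H, ∀ g ∈ H', g * h * g⁻¹ ∈ H)
    (s : G) (hs : s ∈ H') (hsH : s ∉ H)
    (hdecomp : ∀ g ∈ H', g ∈ H ∨ ∃ h ∈ H, g = s * h)
    (i : G ⧸ H → G ⧸ H) (hi : ∀ f : G, i (f : G ⧸ H) = ((f * s : G) : G ⧸ H))
    (π : G →* (lp (fun _ : G ⧸ H => ℂ) 2 ≃ₗᵢ[ℂ] lp (fun _ : G ⧸ H => ℂ) 2))
    (hπ : ∀ (g : G) (φ : lp (fun _ : G ⧸ H => ℂ) 2) (x : G ⧸ H), π g φ x = φ (g⁻¹ • x)) :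
    ∃ V₁ V₂ : Submodule ℂ (lp (fun _ : G ⧸ H => ℂ) 2),
      (∀ φ : lp (fun _ : G ⧸ H => ℂ) 2, φ ∈ V₁ ↔ ∀ x, φ (i x) = φ x) ∧
      (∀ φ : lp (fun _ : G ⧸ H => ℂ) 2, φ ∈ V₂ ↔ ∀ x, φ (i x) = -φ x) ∧
      V₁ ≠ ⊥ ∧ V₂ ≠ ⊥ ∧
      IsClosed (V₁ : Set (lp (fun _ : G ⧸ H => ℂ) 2)) ∧
      IsClosed (V₂ : Set (lp (fun _ : G ⧸ H => ℂ) 2)) ∧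
      (∀ (g : G), ∀ φ ∈ V₁, π g φ ∈ V₁) ∧
      (∀ (g : G), ∀ φ ∈ V₂, π g φ ∈ V₂) ∧
      V₂ = V₁ᗮ ∧
      (Infinite (G ⧸ H) →
        ∃ W : Submodule ℂ (lp (fun _ : G ⧸ H => ℂ) 2),
          IsClosed (W : Set (lp (fun _ : G ⧸ H => ℂ) 2)) ∧
          (∀ (g : G), ∀ φ ∈ W, π g φ ∈ W) ∧ W ≠ ⊥ ∧ W ≠ ⊤) := by
  classical
  set E := lp (fun _ : G ⧸ H => ℂ) 2 with hE
  -- s² ∈ H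
  have hs2 : s * s ∈ H := by
    rcases hdecomp (s * s) (mul_mem hs hs) with h | ⟨h, hh, heq⟩
    · exact h
    · exact absurd (by rwa [show h = s from (mul_left_cancel heq).symm] at hh) hsH
  -- i is an involution
  have hii : ∀ x, i (i x) = x := by
    intro x
    induction x using QuotientGroup.induction_on with
    | H f =>
      rw [hi, hi, QuotientGroup.eq]
      have h2 : (f * s * s)⁻¹ * f = (s * s)⁻¹ := by group
      rw [h2]
      exact inv_mem hs2
  have hinj : Function.Injective i := fun a b hab => by rw [← hii a, hab, hii]
  have hfix : ∀ x, i x ≠ x := by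
    intro x
    induction x using QuotientGroup.induction_on with
    | H f =>
      rw [hi]
      intro hmem
      rw [QuotientGroup.eq] at hmem
      have h2 : (f * s)⁻¹ * f = s⁻¹ := by group
      rw [h2] at hmem
      exact hsH (by simpa using inv_mem hmem)
  have hsmul : ∀ (g f : G), g • ((f : G) : G ⧸ H) = ((g * f : G) : G ⧸ H) := fun _ _ => rfl
  have hcomm : ∀ (g : G) (x : G ⧸ H), i (g • x) = g • i x := by
    intro g x
    induction x using QuotientGroup.induction_on with
    | H f => rw [hsmul, hi, hi, hsmul, mul_assoc]
  let iEq : G ⧸ H ≃ G ⧸ H := ⟨i, i, hii, hii⟩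
  -- the submodules
  let V₁ : Submodule ℂ E :=
    { carrier := {φ : E | ∀ x, φ (i x) = φ x}
      add_mem' := fun {a b} ha hb x => by simp [lp.coeFn_add, ha x, hb x]
      zero_mem' := fun x => by simp
      smul_mem' := fun c a ha x => by rw [lp.coeFn_smul]; simp [ha x] }
  let V₂ : Submodule ℂ E :=
    { carrier := {φ : E | ∀ x, φ (i x) = -φ x}
      add_mem' := fun {a b} ha hb x => by simp [lp.coeFn_add, ha x, hb x]; ring
      zero_mem' := fun x => by simp
      smul_mem' := fun c a ha x => by rw [lp.coeFn_smul]; simp [ha x, smul_neg] }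
  have hV₁mem : ∀ φ : E, φ ∈ V₁ ↔ ∀ x, φ (i x) = φ x := fun φ => Iff.rfl
  have hV₂mem : ∀ φ : E, φ ∈ V₂ ↔ ∀ x, φ (i x) = -φ x := fun φ => Iff.rfl
  -- singles
  have hsingle : ∀ a b : G ⧸ H,
      (lp.single (E := fun _ : G ⧸ H => ℂ) 2 a (1 : ℂ)) b = if b = a then 1 else 0 := by
    intro a b
    by_cases h : b = a
    · simp [h, lp.single_apply_self]
    · simp [h, lp.single_apply_ne (E := fun _ : G ⧸ H => ℂ) 2 a (1 : ℂ) h]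
  have e1 : ∀ z x : G ⧸ H, i x = z ↔ x = i z := by
    intro z x
    exact ⟨fun h => by rw [← h, hii], fun h => by rw [h, hii]⟩
  have e2 : ∀ z x : G ⧸ H, i x = i z ↔ x = z := by
    intro z x
    exact ⟨fun h => hinj h, fun h => by rw [h]⟩
  -- even elements
  have heven : ∀ z : G ⧸ H,
      (lp.single (E := fun _ : G ⧸ H => ℂ) 2 z 1 + lp.single 2 (i z) 1 : E) ∈ V₁ := by
    intro z x
    have : ∀ y, (lp.single (E := fun _ : G ⧸ H => ℂ) 2 z 1 + lp.single 2 (i z) 1 : E) y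
        = (if y = z then (1 : ℂ) else 0) + (if y = i z then 1 else 0) := by
      intro y
      rw [lp.coeFn_add]
      simp [hsingle, Pi.single_apply]
    rw [this, this]
    simp only [e1, e2, hii]
    ring
  -- odd elements
  have hodd : ∀ z : G ⧸ H,
      (lp.single (E := fun _ : G ⧸ H => ℂ) 2 z 1 - lp.single 2 (i z) 1 : E) ∈ V₂ := by
    intro z x
    have : ∀ y, (lp.single (E := fun _ : G ⧸ H => ℂ) 2 z 1 - lp.single 2 (i z) 1 : E) y
        = (if y = z then (1 : ℂ) else 0) - (if y = i z then 1 else 0) := by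
      intro y
      rw [lp.coeFn_sub]
      simp [hsingle, Pi.single_apply]
    rw [this, this]
    simp only [e1, e2, hii]
    ring
  set x₀ : G ⧸ H := ((1 : G) : G ⧸ H) with hx₀
  set φ₁ : E := lp.single 2 x₀ 1 + lp.single 2 (i x₀) 1 with hφ₁def
  set φ₂ : E := lp.single 2 x₀ 1 - lp.single 2 (i x₀) 1 with hφ₂def
  have hφ₁x₀ : φ₁ x₀ = 1 := by
    have hne : ¬ x₀ = i x₀ := fun h => hfix x₀ h.symm
    rw [hφ₁def, lp.coeFn_add]
    simp [hsingle, hne]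
  have hφ₂x₀ : φ₂ x₀ = 1 := by
    have hne : ¬ x₀ = i x₀ := fun h => hfix x₀ h.symm
    rw [hφ₂def, lp.coeFn_sub]
    simp [hsingle, hne]
  have hV₁bot : V₁ ≠ ⊥ := by
    intro hb
    have h0 : φ₁ = 0 := by rw [← Submodule.mem_bot ℂ, ← hb]; exact heven x₀
    rw [h0] at hφ₁x₀
    simp at hφ₁x₀
  have hV₂bot : V₂ ≠ ⊥ := by
    intro hb
    have h0 : φ₂ = 0 := by rw [← Submodule.mem_bot ℂ, ← hb]; exact hodd x₀
    rw [h0] at hφ₂x₀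
    simp at hφ₂x₀
  -- closedness
  have hC₁ : IsClosed (V₁ : Set E) := by
    have : (V₁ : Set E) = ⋂ x, {φ : E | φ (i x) = φ x} := by ext φ; simp [hV₁mem]
    rw [this]
    exact isClosed_iInter fun x =>
      isClosed_eq (lp_eval_continuous _ _) (lp_eval_continuous _ _)
  have hC₂ : IsClosed (V₂ : Set E) := by
    have : (V₂ : Set E) = ⋂ x, {φ : E | φ (i x) = -φ x} := by ext φ; simp [hV₂mem]
    rw [this]
    exact isClosed_iInter fun x =>
      isClosed_eq (lp_eval_continuous _ _) (lp_eval_continuous _ _).neg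
  -- invariance
  have hInv₁ : ∀ (g : G), ∀ φ ∈ V₁, π g φ ∈ V₁ := by
    intro g φ hφ x
    rw [hπ, hπ, ← hcomm]
    exact hφ _
  have hInv₂ : ∀ (g : G), ∀ φ ∈ V₂, π g φ ∈ V₂ := by
    intro g φ hφ x
    rw [hπ, hπ, ← hcomm]
    exact hφ _
  -- orthogonal complement
  have horth : V₂ = V₁ᗮ := by
    ext φ
    constructor
    · intro hφ
      rw [Submodule.mem_orthogonal]
      intro ψ hψ
      rw [lp.inner_eq_tsum]
      have key : (∑' x, (inner ℂ (ψ x) (φ x) : ℂ)) = 0 := by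
        have h1 := iEq.tsum_eq (fun x => (inner ℂ (ψ x) (φ x) : ℂ))
        have h2 : ∀ x, (inner ℂ (ψ (iEq x)) (φ (iEq x)) : ℂ) = -inner ℂ (ψ x) (φ x) := by
          intro x
          show (inner ℂ (ψ (i x)) (φ (i x)) : ℂ) = _
          rw [hψ x, hφ x, inner_neg_right]
        rw [tsum_congr h2, tsum_neg] at h1
        exact CharZero.neg_eq_self_iff.mp h1
      exact key
    · intro hφ
      rw [Submodule.mem_orthogonal] at hφ
      intro x
      have h0 := hφ _ (heven x)
      rw [inner_add_left, lp.inner_single_left, lp.inner_single_left] at h0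
      simp only [RCLike.inner_apply, map_one, one_mul] at h0
      exact eq_neg_of_add_eq_zero_left (by linear_combination h0)
  refine ⟨V₁, V₂, hV₁mem, hV₂mem, hV₁bot, hV₂bot, hC₁, hC₂, hInv₁, hInv₂, horth, ?_⟩
  intro _
  refine ⟨V₁, hC₁, hInv₁, hV₁bot, ?_⟩
  intro htop
  have h2 : φ₂ ∈ V₁ := htop ▸ Submodule.mem_top
  have ha := h2 x₀
  have hb := hodd x₀ x₀
  rw [ha, hφ₂x₀] at hb
  norm_num at hb
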